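/- Let A, B be M×N complex matrices (M < N) with each column of A having unit ℓ² norm, and let ε = max_{i,j} |A_{ij} − B_{ij}|. Then for every subset T of columns with |T| ≤ S and every coefficient vector c supported on T, | ‖A_T c‖₂² − ‖B_T c‖₂² | ≤ (2ε√M + ε²M) S ‖c‖₂². -/

import Mathlib

open Finset

/-- Perturbation bound for restricted quadratic forms: if the columns of `A`
have unit `ℓ²` norm and `‖A_{ij} − B_{ij}‖ ≤ ε` entrywise, then for every
column subset `T` with `|T| ≤ S` and every vector `c` supported on `T`,
`|‖A c‖² − ‖B c‖²| ≤ (2ε√M + ε²M) S ‖c‖²`. -/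
theorem stmt_10 (M N S : ℕ) (hMN : M < N)
    (A B : Matrix (Fin M) (Fin N) ℂ) (ε : ℝ)
    (hcol : ∀ j : Fin N, ∑ i : Fin M, ‖A i j‖ ^ 2 = 1)
    (hε : ∀ i : Fin M, ∀ j : Fin N, ‖A i j - B i j‖ ≤ ε)
    (T : Finset (Fin N)) (hT : T.card ≤ S)
    (c : Fin N → ℂ) (hc : ∀ j ∉ T, c j = 0) :
    |(∑ i : Fin M, ‖∑ j : Fin N, A i j * c j‖ ^ 2) -
      (∑ i : Fin M, ‖∑ j : Fin N, B i j * c j‖ ^ 2)| ≤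
      (2 * ε * Real.sqrt M + ε ^ 2 * M) * S * ∑ j : Fin N, ‖c j‖ ^ 2 := by
  classical
  have hN : 0 < N := lt_of_le_of_lt (Nat.zero_le M) hMN
  rcases Nat.eq_zero_or_pos M with hM0 | hM
  · subst hM0
    have := hcol ⟨0, hN⟩
    simp at this
  have hε0 : 0 ≤ ε := le_trans (norm_nonneg _) (hε ⟨0, hM⟩ ⟨0, hN⟩)
  -- vectors in Euclidean space
  set u : EuclideanSpace ℂ (Fin M) := WithLp.toLp 2 (fun i => ∑ j : Fin N, A i j * c j) with hu
  set v : EuclideanSpace ℂ (Fin M) := WithLp.toLp 2 (fun i => ∑ j : Fin N, B i j * c j) with hv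
  have normsq : ∀ w : EuclideanSpace ℂ (Fin M), ‖w‖ ^ 2 = ∑ i, ‖w i‖ ^ 2 := by
    intro w
    rw [EuclideanSpace.norm_eq, Real.sq_sqrt (Finset.sum_nonneg fun i _ => sq_nonneg _)]
  set e : ℝ := ε * Real.sqrt M with he
  have he0 : 0 ≤ e := mul_nonneg hε0 (Real.sqrt_nonneg _)
  have he2 : e ^ 2 = ε ^ 2 * M := by
    rw [he, mul_pow, Real.sq_sqrt (Nat.cast_nonneg M)]
  -- column vectors
  set colA : Fin N → EuclideanSpace ℂ (Fin M) := fun j => WithLp.toLp 2 (fun i => A i j) with hcolA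
  set colD : Fin N → EuclideanSpace ℂ (Fin M) := fun j => WithLp.toLp 2 (fun i => A i j - B i j) with hcolD
  have hcolA1 : ∀ j, ‖colA j‖ = 1 := by
    intro j
    have : ‖colA j‖ ^ 2 = 1 := by rw [normsq]; exact hcol j
    nlinarith [norm_nonneg (colA j)]
  have hcolDle : ∀ j, ‖colD j‖ ≤ e := by
    intro j
    have h2 : ‖colD j‖ ^ 2 ≤ e ^ 2 := by
      rw [normsq, he2]
      calc ∑ i, ‖colD j i‖ ^ 2 ≤ ∑ _i : Fin M, ε ^ 2 :=
            Finset.sum_le_sum fun i _ => by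
              have := hε i j
              nlinarith [norm_nonneg (A i j - B i j)]
        _ = ε ^ 2 * M := by simp [mul_comm]
    nlinarith [norm_nonneg (colD j)]
  -- restrict sums to T
  have hrestr : ∀ (C : Matrix (Fin M) (Fin N) ℂ) (i : Fin M),
      ∑ j : Fin N, C i j * c j = ∑ j ∈ T, C i j * c j := by
    intro C i
    rw [← Finset.sum_subset (Finset.subset_univ T)]
    intro j _ hj
    simp [hc j hj]
  have happly : ∀ (f : Fin N → EuclideanSpace ℂ (Fin M)) (i : Fin M),
      (∑ j ∈ T, f j) i = ∑ j ∈ T, f j i := fun f i => by rw [WithLp.ofLp_sum]; exact Finset.sum_apply i T _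
  have husum : u = ∑ j ∈ T, c j • colA j := by
    ext i
    rw [happly, hu]
    simp only [PiLp.toLp_apply, PiLp.smul_apply, smul_eq_mul]
    rw [hrestr A i]
    exact Finset.sum_congr rfl fun j _ => mul_comm _ _
  have hdsum : u - v = ∑ j ∈ T, c j • colD j := by
    ext i
    rw [PiLp.sub_apply, happly, hu, hv]
    simp only [PiLp.toLp_apply, PiLp.smul_apply, smul_eq_mul]
    rw [hrestr A i, hrestr B i, ← Finset.sum_sub_distrib]
    refine Finset.sum_congr rfl fun j _ => ?_
    simp only [hcolD, PiLp.toLp_apply]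
    ring
  set Q : ℝ := ∑ j ∈ T, ‖c j‖ with hQ
  set R : ℝ := ∑ j : Fin N, ‖c j‖ ^ 2 with hR
  have huQ : ‖u‖ ≤ Q := by
    rw [husum]
    calc ‖∑ j ∈ T, c j • colA j‖ ≤ ∑ j ∈ T, ‖c j • colA j‖ := norm_sum_le _ _
      _ = ∑ j ∈ T, ‖c j‖ := by
          refine Finset.sum_congr rfl fun j _ => ?_
          rw [norm_smul, hcolA1, mul_one]
  have hdQ : ‖u - v‖ ≤ e * Q := by
    rw [hdsum]
    calc ‖∑ j ∈ T, c j • colD j‖ ≤ ∑ j ∈ T, ‖c j • colD j‖ := norm_sum_le _ _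
      _ ≤ ∑ j ∈ T, ‖c j‖ * e := by
          refine Finset.sum_le_sum fun j _ => ?_
          rw [norm_smul]
          exact mul_le_mul_of_nonneg_left (hcolDle j) (norm_nonneg _)
      _ = e * Q := by rw [hQ, ← Finset.sum_mul, mul_comm]
  have hQ2 : Q ^ 2 ≤ (S : ℝ) * R := by
    calc Q ^ 2 ≤ T.card * ∑ j ∈ T, ‖c j‖ ^ 2 := by
          exact_mod_cast sq_sum_le_card_mul_sum_sq (s := T) (f := fun j => ‖c j‖)
      _ ≤ (S : ℝ) * R := by
          apply mul_le_mul
          · exact_mod_cast hT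
          · exact Finset.sum_le_sum_of_subset_of_nonneg (Finset.subset_univ T)
              fun j _ _ => sq_nonneg _
          · exact Finset.sum_nonneg fun j _ => sq_nonneg _
          · exact Nat.cast_nonneg S
  have hgoal1 : (∑ i : Fin M, ‖∑ j : Fin N, A i j * c j‖ ^ 2) = ‖u‖ ^ 2 := (normsq u).symm
  have hgoal2 : (∑ i : Fin M, ‖∑ j : Fin N, B i j * c j‖ ^ 2) = ‖v‖ ^ 2 := (normsq v).symm
  rw [hgoal1, hgoal2, ← he2]
  have hvu : ‖v‖ ≤ ‖u‖ + ‖u - v‖ := by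
    have := norm_sub_norm_le u v
    have h2 := abs_le.mp (abs_norm_sub_norm_le u v)
    linarith [h2.1]
  have habs : |‖u‖ - ‖v‖| ≤ ‖u - v‖ := abs_norm_sub_norm_le u v
  have hQ0 : 0 ≤ Q := Finset.sum_nonneg fun j _ => norm_nonneg _
  have key : |‖u‖ ^ 2 - ‖v‖ ^ 2| ≤ (2 * e + e ^ 2) * Q ^ 2 := by
    have hfac : ‖u‖ ^ 2 - ‖v‖ ^ 2 = (‖u‖ - ‖v‖) * (‖u‖ + ‖v‖) := by ring
    rw [hfac, abs_mul]
    have h1 : |‖u‖ + ‖v‖| = ‖u‖ + ‖v‖ :=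
      abs_of_nonneg (add_nonneg (norm_nonneg _) (norm_nonneg _))
    rw [h1]
    have hub : ‖u‖ + ‖v‖ ≤ 2 * Q + e * Q := by linarith
    calc |‖u‖ - ‖v‖| * (‖u‖ + ‖v‖) ≤ (e * Q) * (2 * Q + e * Q) := by
          apply mul_le_mul (le_trans habs hdQ) hub
            (add_nonneg (norm_nonneg _) (norm_nonneg _)) (mul_nonneg he0 hQ0)
      _ = (2 * e + e ^ 2) * Q ^ 2 := by ring
  have hR0 : 0 ≤ R := Finset.sum_nonneg fun j _ => sq_nonneg _
  calc |‖u‖ ^ 2 - ‖v‖ ^ 2| ≤ (2 * e + e ^ 2) * Q ^ 2 := key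
    _ ≤ (2 * e + e ^ 2) * ((S : ℝ) * R) := by
        apply mul_le_mul_of_nonneg_left hQ2 (by positivity)
    _ = (2 * ε * Real.sqrt M + e ^ 2) * S * R := by rw [he]; ring
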